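/- Let n ≥ 1, let q ∈ (0,1) be the deletion probability and p = 1−q the retention probability. There exists an absolute constant C > 0 such that for every integer m ≥ 1 and every tuple Z = (z_1, …, z_m) of nonzero complex numbers, there exists a function g_m (from pairs consisting of a binary string and the tuple Z to ℂ, depending on n, p, m, Z but not on x) such that for every x ∈ {0,1}^n, the expectation over a trace x̃ of x through the deletion channel with deletion probability q satisfies E[g_m(x̃, Z)] = Π_{k=1}^m (Σ_{i=1}^n x_i z_k^i). Moreover, for every real L ≥ 1 and every Z with |z_1| = ⋯ = |z_m| = 1 and |arg z_i| ≤ 1/L for all i, the bound |g_m(x̃, Z)| ≤ (p^{−1} m n)^{C·m} · e^{C·m²n/(p²L²)} holds for every binary string x̃ of length at most n. -/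

import Mathlib

/-- The probability of a given deletion pattern: each bit with `m i = true` is retained
(probability `1 - q`) and each bit with `m i = false` is deleted (probability `q`). -/
noncomputable def maskProb (q : ℝ) {n : ℕ} (m : Fin n → Bool) : ℝ :=
  ∏ i : Fin n, if m i then (1 - q) else q

/-- The trace of the length-`n` string `x` under the deletion pattern `m`:
the retained bits concatenated in order. -/
def applyMask {n : ℕ} (x : ℕ → Bool) (m : Fin n → Bool) : List Bool :=
  ((List.finRange n).filter (fun i => m i)).map (fun i => x i.val)

open Complex

/-- Expected value of `g` over traces of the list `x`, retention probability `p`. -/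
noncomputable def EV (p : ℂ) : List Bool → (List Bool → ℂ) → ℂ
  | [], g => g []
  | b :: x, g => (1 - p) * EV p x g + p * EV p x (fun y => g (b :: y))

/-- Correlation sums: `FF ws cs = ∑_{i₁<⋯<i_t} ∏_s c_{i_s} w_s^{i_s - i_{s-1} - 1}`. -/
noncomputable def FF : List ℂ → List ℂ → ℂ
  | [], _ => 1
  | _ :: _, [] => 0
  | w :: ws, c :: y => c * FF ws y + w * FF (w :: ws) y

/-- `A vs x = ∑_{i₁<⋯<i_t} ∏_s x_{i_s} v_s^{i_s}` (1-indexed). -/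
noncomputable def A : List ℂ → List Bool → ℂ
  | [], _ => 1
  | _ :: _, [] => 0
  | v :: vs, b :: x => v * vs.prod * ((if b then A vs x else 0) + A (v :: vs) x)

noncomputable def chain : List ℂ → List ℂ
  | [] => []
  | v :: vs => v * vs.prod :: chain vs

noncomputable def bitC (b : Bool) : ℂ := if b then 1 else 0

noncomputable def expand (z : ℂ) : List ℂ → List (List ℂ)
  | [] => [[z]]
  | v :: vs => (z :: v :: vs) :: (z * v :: vs) :: (expand z vs).map (v :: ·)

noncomputable def parts : List ℂ → List (List ℂ)
  | [] => [[]]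
  | z :: zs => (((parts zs).map (expand z)).flatten)

lemma EV_add (p : ℂ) (x : List Bool) (g h : List Bool → ℂ) :
    EV p x (fun y => g y + h y) = EV p x g + EV p x h := by
  induction x generalizing g h with
  | nil => simp [EV]
  | cons b x ih => simp [EV, ih]; ring

lemma EV_mul (p : ℂ) (x : List Bool) (c : ℂ) (g : List Bool → ℂ) :
    EV p x (fun y => c * g y) = c * EV p x g := by
  induction x generalizing g with
  | nil => simp [EV]
  | cons b x ih => simp [EV, ih]; ring

lemma EV_sum (p : ℂ) (x : List Bool) (l : List (List ℂ)) (f : List ℂ → List Bool → ℂ) :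
    EV p x (fun y => (l.map (fun v => f v y)).sum) = (l.map (fun v => EV p x (f v))).sum := by
  induction l with
  | nil =>
    simp only [List.map_nil, List.sum_nil]
    induction x with
    | nil => simp [EV]
    | cons b x ih => simp [EV, ih]
  | cons v l ih =>
    simp only [List.map_cons, List.sum_cons, ← ih, ← EV_add]

lemma EV_FF (p : ℂ) (β : Bool → ℂ) (x : List Bool) (ws : List ℂ) :
    EV p x (fun y => FF ws (y.map β)) =
      FF (ws.map fun w => (1 - p) + p * w) (x.map fun b => p * β b) := by
  induction x generalizing ws with
  | nil =>
    cases ws with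
    | nil => simp [EV, FF]
    | cons w ws => simp [EV, FF]
  | cons b x ih =>
    cases ws with
    | nil =>
      have h1 : EV p x (fun _ => (1:ℂ)) = 1 := by
        have := ih ([] : List ℂ)
        simpa [FF] using this
      simp [EV, FF]
      rw [h1]; ring
    | cons w ws =>
      simp only [EV]
      have e1 : (fun y => FF (w :: ws) (List.map β (b :: y)))
          = fun y => β b * FF ws (y.map β) + w * FF (w :: ws) (y.map β) := by
        funext y; simp [FF]
      rw [e1, EV_add, EV_mul, EV_mul, ih ws, ih (w :: ws)]
      simp only [List.map_cons, FF]
      ring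

lemma A_eq_FF (vs : List ℂ) (x : List Bool) :
    A vs x = (chain vs).prod * FF (chain vs) (x.map bitC) := by
  induction x generalizing vs with
  | nil =>
    cases vs with
    | nil => simp [A, chain, FF]
    | cons v vs => simp [A, chain, FF]
  | cons b x ih =>
    cases vs with
    | nil => simp [A, chain, FF]
    | cons v vs =>
      simp only [A, chain, List.map_cons, FF, List.prod_cons, bitC]
      rw [ih vs, ih (v :: vs)]
      simp only [chain, List.prod_cons]
      cases b <;> simp <;> ring

lemma FF_map_mul (c : ℂ) (ws : List ℂ) (y : List ℂ) :
    FF ws (y.map (fun u => c * u)) = c ^ ws.length * FF ws y := by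
  induction y generalizing ws with
  | nil => cases ws <;> simp [FF]
  | cons a y ih =>
    cases ws with
    | nil => simp [FF]
    | cons w ws =>
      simp only [List.map_cons, FF, ih ws, ih (w :: ws), List.length_cons]
      ring

lemma expand_ne_nil (z : ℂ) : ∀ vs, ∀ u ∈ expand z vs, u ≠ [] := by
  intro vs
  induction vs with
  | nil => simp [expand]
  | cons v vs ih =>
    intro u hu
    simp only [expand, List.mem_cons, List.mem_map] at hu
    rcases hu with rfl | rfl | ⟨w, _, rfl⟩ <;> simp

lemma expand_prod (z : ℂ) : ∀ vs, ∀ u ∈ expand z vs, u.prod = z * vs.prod := by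
  intro vs
  induction vs with
  | nil => simp [expand]
  | cons v vs ih =>
    intro u hu
    simp only [expand, List.mem_cons, List.mem_map] at hu
    rcases hu with rfl | rfl | ⟨w, hw, rfl⟩
    · simp [List.prod_cons]; try ring
    · simp [List.prod_cons]; try ring
    · simp only [List.prod_cons, ih w hw]; ring

lemma A_mul (z : ℂ) : ∀ (x : List Bool) (vs : List ℂ),
    A [z] x * A vs x = ((expand z vs).map fun u => A u x).sum := by
  intro x
  induction x with
  | nil =>
    intro vs
    have h0 : ∀ u ∈ expand z vs, A u [] = 0 := by
      intro u hu
      rcases u with _ | ⟨a, u⟩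
      · exact absurd rfl (expand_ne_nil z vs [] hu)
      · simp [A]
    cases vs with
    | nil => simp [A, expand]
    | cons v vs =>
      have : ((expand z (v :: vs)).map fun u => A u []).sum = 0 := by
        apply List.sum_eq_zero
        intro c hc
        simp only [List.mem_map] at hc
        obtain ⟨u, hu, rfl⟩ := hc
        exact h0 u hu
      simp [A, this]
  | cons b x ih =>
    intro vs
    cases vs with
    | nil => simp [A, expand]
    | cons v vs =>
      have hprod : ∀ u ∈ expand z vs, u.prod = z * vs.prod := expand_prod z vs
      have hsum2 : ((expand z vs).map fun u => A (v :: u) x).sum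
          = A [z] x * A (v :: vs) x - A (z :: v :: vs) x - A (z * v :: vs) x := by
        have h := ih (v :: vs)
        simp only [expand, List.map_cons, List.sum_cons, List.map_map] at h
        have h2 : ((expand z vs).map fun u => A (v :: u) x).sum
            = ((expand z vs).map ((fun u => A u x) ∘ (v :: ·))).sum := rfl
        rw [h2]
        linear_combination -h
      have hsum1 : ((expand z vs).map fun u => A u x).sum = A [z] x * A vs x :=
        (ih vs).symm
      have hmap : ((expand z vs).map fun u => A (v :: u) (b :: x)).sum
          = v * (z * vs.prod) *
            ((if b then A [z] x * A vs x else 0) +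
              (A [z] x * A (v :: vs) x - A (z :: v :: vs) x - A (z * v :: vs) x)) := by
        have e1 : ((expand z vs).map fun u => A (v :: u) (b :: x))
            = (expand z vs).map fun u =>
                v * (z * vs.prod) * ((if b then A u x else 0) + A (v :: u) x) := by
          apply List.map_congr_left
          intro u hu
          simp only [A, hprod u hu]
        rw [e1, show ((expand z vs).map fun u =>
              v * (z * vs.prod) * ((if b then A u x else 0) + A (v :: u) x)).sum
            = v * (z * vs.prod) * (((expand z vs).map fun u =>
                ((if b then A u x else 0) + A (v :: u) x)).sum) from
            (List.sum_map_mul_left _ _ _)]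
        have e3 : ((expand z vs).map fun u => ((if b then A u x else 0) + A (v :: u) x)).sum
            = (if b then ((expand z vs).map fun u => A u x).sum else 0)
              + ((expand z vs).map fun u => A (v :: u) x).sum := by
          cases b <;> simp [List.sum_map_add]
        rw [e3, hsum1, hsum2]
      simp only [expand, List.map_cons, List.sum_cons, List.map_map]
      have h2 : ((expand z vs).map ((fun u => A u (b :: x)) ∘ (v :: ·))).sum
          = ((expand z vs).map fun u => A (v :: u) (b :: x)).sum := rfl
      rw [h2, hmap]
      simp only [A, List.prod_cons, List.prod_nil]
      cases b <;> simp <;> ring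

lemma prod_A (x : List Bool) : ∀ zs : List ℂ,
    (zs.map fun z => A [z] x).prod = ((parts zs).map fun vs => A vs x).sum := by
  intro zs
  induction zs with
  | nil => simp [parts, A]
  | cons z zs ih =>
    simp only [List.map_cons, List.prod_cons, ih, parts]
    rw [List.map_flatten, List.sum_flatten]
    rw [← List.sum_map_mul_left]
    simp only [List.map_map]
    congr 1
    apply List.map_congr_left
    intro vs _
    simpa using A_mul z x vs

lemma A_single (z : ℂ) (x : ℕ → Bool) : ∀ n : ℕ,
    A [z] (List.ofFn fun i : Fin n => x i) =
      ∑ i ∈ Finset.range n, (if x i then 1 else 0 : ℂ) * z ^ (i + 1) := by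
  intro n
  induction n generalizing x with
  | zero => simp [A]
  | succ n ih =>
    rw [List.ofFn_succ]
    simp only [A, List.prod_nil, Fin.val_zero, Fin.val_succ]
    rw [Finset.sum_range_succ']
    have := ih (fun i => x (i + 1))
    rw [this]
    have e : ∑ k ∈ Finset.range n, (if x (k+1) = true then (1:ℂ) else 0) * z ^ (k + 1 + 1)
        = z * ∑ k ∈ Finset.range n, (if x (k+1) = true then (1:ℂ) else 0) * z ^ (k + 1) := by
      rw [Finset.mul_sum]; apply Finset.sum_congr rfl; intro i _; ring
    rw [e]; ring

lemma sum_mask_succ {n : ℕ} (f : (Fin (n + 1) → Bool) → ℂ) :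
    ∑ mask : Fin (n + 1) → Bool, f mask
      = ∑ b : Bool, ∑ mask : Fin n → Bool, f (Fin.cons b mask) := by
  rw [← (Fin.consEquiv fun _ => Bool).sum_comp f]
  rw [Fintype.sum_prod_type]
  rfl

lemma applyMask_cons {n : ℕ} (x : ℕ → Bool) (b : Bool) (mask : Fin n → Bool) :
    applyMask x (Fin.cons b mask)
      = (if b then [x 0] else []) ++ applyMask (fun i => x (i + 1)) mask := by
  unfold applyMask
  rw [List.finRange_succ]
  rw [List.filter_cons]
  simp only [Fin.cons_zero]
  rw [List.filter_map]
  have : ((fun i : Fin (n+1) => Fin.cons b mask i) ∘ Fin.succ) = fun i : Fin n => mask i := by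
    funext i; simp [Fin.cons_succ]
  rw [this]
  cases b <;> simp [List.map_map, Function.comp_def, Fin.val_succ]

lemma maskSum (q : ℝ) : ∀ (n : ℕ) (x : ℕ → Bool) (g : List Bool → ℂ),
    (∑ mask : Fin n → Bool, (maskProb q mask : ℂ) * g (applyMask x mask))
      = EV ((1 - q : ℝ) : ℂ) (List.ofFn fun i : Fin n => x i) g := by
  intro n
  induction n with
  | zero =>
    intro x g
    simp [maskProb, applyMask, EV, List.ofFn_zero]
  | succ n ih =>
    intro x g
    rw [sum_mask_succ (fun mask => (maskProb q mask : ℂ) * g (applyMask x mask))]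
    have hm : ∀ (b : Bool) (mask : Fin n → Bool),
        (maskProb q (Fin.cons b mask) : ℂ)
          = (if b then ((1 - q : ℝ) : ℂ) else (q : ℂ)) * (maskProb q mask : ℂ) := by
      intro b mask
      unfold maskProb
      rw [Fin.prod_univ_succ]
      simp only [Fin.cons_zero, Fin.cons_succ]
      push_cast
      cases b <;> simp
    have key : ∀ b : Bool,
        (∑ mask : Fin n → Bool, (maskProb q (Fin.cons b mask) : ℂ)
            * g (applyMask x (Fin.cons b mask)))
          = (if b then ((1 - q : ℝ) : ℂ) else (q : ℂ))
            * EV ((1 - q : ℝ) : ℂ) (List.ofFn fun i : Fin n => x (i + 1))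
                (fun y => g ((if b then [x 0] else []) ++ y)) := by
      intro b
      rw [← ih (fun i => x (i + 1)) (fun y => g ((if b then [x 0] else []) ++ y))]
      rw [Finset.mul_sum]
      apply Finset.sum_congr rfl
      intro mask _
      rw [hm b mask, applyMask_cons]
      ring
    rw [Fintype.sum_bool, key true, key false]
    rw [List.ofFn_succ]
    simp only [EV, Fin.val_zero, Fin.val_succ]
    push_cast
    simp only [List.singleton_append, List.nil_append]
    ring

lemma chain_length (vs : List ℂ) : (chain vs).length = vs.length := by
  induction vs with
  | nil => simp [chain]
  | cons v vs ih => simp [chain, ih]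

lemma EV_term (P : ℂ) (hP : P ≠ 0) (vs : List ℂ) (x : List Bool) :
    EV P x (fun y => (chain vs).prod * (P⁻¹) ^ vs.length *
        FF ((chain vs).map fun u => (u - (1 - P)) / P) (y.map bitC)) = A vs x := by
  rw [EV_mul, EV_FF P bitC x]
  have h1 : (((chain vs).map fun u => (u - (1 - P)) / P).map fun w => (1 - P) + P * w)
      = chain vs := by
    rw [List.map_map]
    have : ∀ u ∈ chain vs, ((fun w => (1 - P) + P * w) ∘ fun u => (u - (1 - P)) / P) u = u := by
      intro u _
      simp only [Function.comp]
      field_simp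
      ring
    rw [List.map_congr_left this]; exact List.map_id _
  have h2 : (x.map fun b => P * bitC b) = (x.map bitC).map (fun u => P * u) := by
    rw [List.map_map]; rfl
  rw [h1, h2, FF_map_mul, chain_length, A_eq_FF]
  have : (P⁻¹) ^ vs.length * P ^ vs.length = 1 := by
    rw [← mul_pow, inv_mul_cancel₀ hP, one_pow]
  calc (chain vs).prod * P⁻¹ ^ vs.length * (P ^ vs.length * FF (chain vs) (x.map bitC))
      = (chain vs).prod * FF (chain vs) (x.map bitC) * (P⁻¹ ^ vs.length * P ^ vs.length) := by ring
    _ = _ := by rw [this, mul_one]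

/-- The estimator. -/
noncomputable def gEst (q : ℝ) (zs : List ℂ) (y : List Bool) : ℂ :=
  ((parts zs).map (fun vs => (chain vs).prod * (((1 - q : ℝ) : ℂ)⁻¹) ^ vs.length *
      FF ((chain vs).map fun u => (u - (1 - ((1 - q : ℝ) : ℂ))) / ((1 - q : ℝ) : ℂ))
        (y.map bitC))).sum

lemma unbiased (q : ℝ) (hq1 : q < 1) (n m : ℕ) (Z : Fin m → ℂ) (x : ℕ → Bool) :
    (∑ mask : Fin n → Bool, (maskProb q mask : ℂ) * gEst q (List.ofFn Z) (applyMask x mask))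
      = ∏ k : Fin m, ∑ i ∈ Finset.range n, (if x i then 1 else 0 : ℂ) * Z k ^ (i + 1) := by
  have hP : ((1 - q : ℝ) : ℂ) ≠ 0 := by
    simp only [ne_eq, Complex.ofReal_eq_zero]
    linarith
  rw [maskSum q n x (gEst q (List.ofFn Z))]
  unfold gEst
  rw [EV_sum]
  have e1 : ((parts (List.ofFn Z)).map fun vs =>
        EV ((1 - q : ℝ) : ℂ) (List.ofFn fun i : Fin n => x i)
          (fun y => (chain vs).prod * (((1 - q : ℝ) : ℂ)⁻¹) ^ vs.length *
            FF ((chain vs).map fun u => (u - (1 - ((1 - q : ℝ) : ℂ))) / ((1 - q : ℝ) : ℂ))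
              (y.map bitC)))
      = (parts (List.ofFn Z)).map fun vs => A vs (List.ofFn fun i : Fin n => x i) := by
    apply List.map_congr_left
    intro vs _
    exact EV_term _ hP vs _
  rw [e1, ← prod_A]
  rw [List.map_ofFn, List.prod_ofFn]
  apply Finset.prod_congr rfl
  intro k _
  exact A_single (Z k) x n

noncomputable def eθ (θ : ℝ) : ℂ := Complex.exp (θ * Complex.I)

lemma eθ_abs (θ : ℝ) : ‖eθ θ‖ = 1 := Complex.norm_exp_ofReal_mul_I θ

lemma eθ_mul (θ₁ θ₂ : ℝ) : eθ θ₁ * eθ θ₂ = eθ (θ₁ + θ₂) := by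
  unfold eθ
  rw [← Complex.exp_add]
  push_cast
  ring_nf

lemma prod_eθ (θs : List ℝ) : ((θs.map eθ).prod) = eθ θs.sum := by
  induction θs with
  | nil => simp [eθ]
  | cons θ θs ih => simp [ih, eθ_mul, List.sum_cons]

lemma FF_bound (M : ℝ) (hM : 1 ≤ M) :
    ∀ (cs ws : List ℂ), (∀ w ∈ ws, ‖w‖ ≤ M) → (∀ c ∈ cs, ‖c‖ ≤ 1) →
      ‖FF ws cs‖ ≤ (cs.length.choose ws.length) * M ^ cs.length := by
  intro cs
  induction cs with
  | nil =>
    intro ws _ _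
    cases ws with
    | nil => simp [FF]
    | cons w ws => simp [FF]
  | cons c cs ih =>
    intro ws hw hc
    have hM0 : (0:ℝ) ≤ M := le_trans zero_le_one hM
    cases ws with
    | nil =>
      simp only [FF, List.length_cons, List.length_nil, Nat.choose_zero_right, Nat.cast_one, one_mul, norm_one]
      exact one_le_pow₀ hM
    | cons w ws =>
      have hc' : ∀ a ∈ cs, ‖a‖ ≤ 1 := fun a ha => hc a (List.mem_cons_of_mem _ ha)
      have hws : ∀ a ∈ ws, ‖a‖ ≤ M := fun a ha => hw a (List.mem_cons_of_mem _ ha)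
      have h1 := ih ws hws hc'
      have h2 := ih (w :: ws) hw hc'
      have hcc : ‖c‖ ≤ 1 := hc c (List.mem_cons_self)
      have hwc : ‖w‖ ≤ M := hw w (List.mem_cons_self)
      simp only [FF, List.length_cons]
      have t1 : ‖c‖ * ‖FF ws cs‖
          ≤ 1 * ((cs.length.choose ws.length) * M ^ cs.length) :=
        mul_le_mul hcc h1 (norm_nonneg _) zero_le_one
      have t2 : ‖w‖ * ‖FF (w :: ws) cs‖
          ≤ M * ((cs.length.choose (ws.length + 1)) * M ^ cs.length) :=
        mul_le_mul hwc h2 (norm_nonneg _) hM0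
      have t0 : ‖c * FF ws cs + w * FF (w :: ws) cs‖
          ≤ ‖c‖ * ‖FF ws cs‖
            + ‖w‖ * ‖FF (w :: ws) cs‖ := by
        refine (norm_add_le _ _).trans ?_
        simp [norm_mul]
      have e1 : ((cs.length.choose ws.length : ℝ)) * M ^ cs.length
          ≤ ((cs.length.choose ws.length : ℝ)) * M ^ (cs.length + 1) := by
        have := pow_le_pow_right₀ hM (Nat.le_succ cs.length)
        have hcn : (0:ℝ) ≤ (cs.length.choose ws.length : ℝ) := Nat.cast_nonneg _
        exact mul_le_mul_of_nonneg_left this hcn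
      have e2 : M * ((cs.length.choose (ws.length+1) : ℝ) * M ^ cs.length)
          = ((cs.length.choose (ws.length+1) : ℝ)) * M ^ (cs.length + 1) := by
        rw [pow_succ]; ring
      rw [Nat.choose_succ_succ, Nat.cast_add, add_mul]
      linarith

lemma abs_list_sum (θs : List ℝ) : |θs.sum| ≤ (θs.map (fun t => |t|)).sum := by
  induction θs with
  | nil => simp
  | cons θ θs ih =>
    simp only [List.sum_cons, List.map_cons]
    exact (abs_add_le _ _).trans (by linarith)

lemma expand_exp (θ₀ : ℝ) : ∀ (θs : List ℝ), ∀ vs' ∈ expand (eθ θ₀) (θs.map eθ),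
    ∃ θs' : List ℝ, vs' = θs'.map eθ ∧ (θs'.map (fun t => |t|)).sum ≤ |θ₀| + (θs.map (fun t => |t|)).sum := by
  intro θs
  induction θs with
  | nil =>
    intro vs' h
    simp only [List.map_nil, expand, List.mem_singleton] at h
    exact ⟨[θ₀], by simp [h]⟩
  | cons θ θs ih =>
    intro vs' h
    simp only [List.map_cons, expand, List.mem_cons, List.mem_map] at h
    rcases h with rfl | rfl | ⟨u, hu, rfl⟩
    · refine ⟨θ₀ :: θ :: θs, by simp, ?_⟩
      simp only [List.map_cons, List.sum_cons]
      linarith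
    · refine ⟨(θ₀ + θ) :: θs, by simp [eθ_mul], ?_⟩
      simp only [List.map_cons, List.sum_cons]
      have := abs_add_le θ₀ θ
      linarith
    · obtain ⟨θs'', h1, h2⟩ := ih u hu
      refine ⟨θ :: θs'', by simp [h1], ?_⟩
      simp only [List.map_cons, List.sum_cons]
      linarith

lemma parts_exp (δ : ℝ) : ∀ (zs : List ℂ),
    (∀ z ∈ zs, ∃ θ : ℝ, |θ| ≤ δ ∧ z = eθ θ) →
    ∀ vs ∈ parts zs, ∃ θs : List ℝ,
      vs = θs.map eθ ∧ (θs.map (fun t => |t|)).sum ≤ zs.length * δ := by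
  intro zs
  induction zs with
  | nil =>
    intro _ vs h
    simp only [parts, List.mem_singleton] at h
    exact ⟨[], by simp [h]⟩
  | cons z zs ih =>
    intro hz vs h
    simp only [parts, List.mem_flatten] at h
    obtain ⟨l, hl, hvs⟩ := h
    simp only [List.mem_map] at hl
    obtain ⟨u, hu, rfl⟩ := hl
    obtain ⟨θs, rfl, hθs⟩ := ih (fun w hw => hz w (List.mem_cons_of_mem _ hw)) u hu
    obtain ⟨θ₀, hθ₀, hz0⟩ := hz z (List.mem_cons_self)
    rw [hz0] at hvs
    obtain ⟨θs', h1, h2⟩ := expand_exp θ₀ θs vs hvs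
    refine ⟨θs', h1, ?_⟩
    simp only [List.length_cons]
    push_cast
    nlinarith

lemma chain_exp : ∀ (θs : List ℝ), ∀ u ∈ chain (θs.map eθ),
    ∃ θ : ℝ, |θ| ≤ (θs.map (fun t => |t|)).sum ∧ u = eθ θ := by
  intro θs
  induction θs with
  | nil => simp [chain]
  | cons θ₀ θs ih =>
    intro u hu
    simp only [List.map_cons, chain, List.mem_cons] at hu
    rcases hu with rfl | hu
    · refine ⟨θ₀ + θs.sum, ?_, by rw [prod_eθ, eθ_mul]⟩
      have := abs_list_sum θs
      have := abs_add_le θ₀ θs.sum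
      simp only [List.map_cons, List.sum_cons]
      linarith
    · obtain ⟨θ, h1, h2⟩ := ih u hu
      refine ⟨θ, ?_, h2⟩
      simp only [List.map_cons, List.sum_cons]
      have : (0:ℝ) ≤ |θ₀| := abs_nonneg _
      linarith

lemma phi_bound (p θ B : ℝ) (hp0 : 0 < p) (hp1 : p ≤ 1) (hθ : |θ| ≤ B) :
    ‖(eθ θ - ((1 - p : ℝ) : ℂ)) / (p : ℂ)‖ ≤ Real.exp (B ^ 2 / (2 * p ^ 2)) := by
  have hB0 : 0 ≤ B := le_trans (abs_nonneg θ) hθ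
  have habs2 : (‖eθ θ - ((1 - p : ℝ) : ℂ)‖) ^ 2 ≤ p ^ 2 + θ ^ 2 := by
    rw [Complex.sq_norm, Complex.normSq_apply]
    have hre : (eθ θ - ((1 - p : ℝ) : ℂ)).re = Real.cos θ - (1 - p) := by
      simp [eθ, Complex.exp_ofReal_mul_I_re]
    have him : (eθ θ - ((1 - p : ℝ) : ℂ)).im = Real.sin θ := by
      simp [eθ, Complex.exp_ofReal_mul_I_im]
    rw [hre, him]
    have hcos := Real.one_sub_sq_div_two_le_cos (x := θ)
    have hsc := Real.sin_sq_add_cos_sq θ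
    nlinarith [sq_nonneg θ, sq_nonneg (1 - p)]
  have hθB : θ ^ 2 ≤ B ^ 2 := by nlinarith [abs_nonneg θ, neg_abs_le θ, le_abs_self θ]
  have hexp : p ^ 2 + B ^ 2 ≤ (p * Real.exp (B ^ 2 / (2 * p ^ 2))) ^ 2 := by
    have h1 : B ^ 2 / p ^ 2 + 1 ≤ Real.exp (B ^ 2 / p ^ 2) := Real.add_one_le_exp _
    have h2 : (Real.exp (B ^ 2 / (2 * p ^ 2))) ^ 2 = Real.exp (B ^ 2 / p ^ 2) := by
      rw [← Real.exp_nat_mul]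
      congr 1
      field_simp
      ring
    rw [mul_pow, h2]
    have hp2 : (0:ℝ) < p ^ 2 := by positivity
    rw [show p ^ 2 * Real.exp (B ^ 2 / p ^ 2) = p ^ 2 * Real.exp (B ^ 2 / p ^ 2) from rfl]
    calc p ^ 2 + B ^ 2 = p ^ 2 * (B ^ 2 / p ^ 2 + 1) := by field_simp; ring
      _ ≤ p ^ 2 * Real.exp (B ^ 2 / p ^ 2) := by
          exact mul_le_mul_of_nonneg_left h1 (le_of_lt hp2)
  have habs : ‖eθ θ - ((1 - p : ℝ) : ℂ)‖ ≤ p * Real.exp (B ^ 2 / (2 * p ^ 2)) := by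
    have h0 : (0:ℝ) ≤ ‖eθ θ - ((1 - p : ℝ) : ℂ)‖ := norm_nonneg _
    have h0' : (0:ℝ) ≤ p * Real.exp (B ^ 2 / (2 * p ^ 2)) := by positivity
    nlinarith
  rw [norm_div, Complex.norm_real, Real.norm_eq_abs, abs_of_pos hp0, div_le_iff₀ hp0]
  linarith [habs]

lemma chain_prod_abs (θs : List ℝ) : ‖(chain (θs.map eθ)).prod‖ = 1 := by
  rw [List.norm_prod]
  apply List.prod_eq_one
  intro a ha
  simp only [List.mem_map] at ha
  obtain ⟨u, hu, rfl⟩ := ha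
  obtain ⟨θ, _, rfl⟩ := chain_exp θs u hu
  exact eθ_abs θ

lemma abs_list_sum_c (l : List ℂ) : ‖l.sum‖ ≤ (l.map norm).sum := by
  induction l with
  | nil => simp
  | cons a l ih =>
    simp only [List.sum_cons, List.map_cons]
    exact (norm_add_le _ _).trans (by linarith)

lemma list_sum_le_real {α : Type*} (l : List α) (f : α → ℝ) (K : ℝ) (h : ∀ a ∈ l, f a ≤ K) :
    (l.map f).sum ≤ l.length * K := by
  induction l with
  | nil => simp
  | cons a l ih =>
    simp only [List.map_cons, List.sum_cons, List.length_cons]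
    have := ih (fun b hb => h b (List.mem_cons_of_mem _ hb))
    have := h a (List.mem_cons_self)
    push_cast
    nlinarith [this]

lemma parts_sum_le (l : List (List ℂ)) (f : List ℂ → ℝ) (K : ℝ) (h : ∀ a ∈ l, f a ≤ K) :
    (l.map f).sum ≤ l.length * K := by
  induction l with
  | nil => simp
  | cons a l ih =>
    simp only [List.map_cons, List.sum_cons, List.length_cons]
    have h1 := ih (fun b hb => h b (List.mem_cons_of_mem _ hb))
    have h2 := h a (List.mem_cons_self)
    push_cast
    nlinarith [h1, h2]

lemma list_sum_le_nat (l : List (List ℂ)) (f : List ℂ → ℕ) (K : ℕ)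
    (h : ∀ a ∈ l, f a ≤ K) : (l.map f).sum ≤ l.length * K := by
  induction l with
  | nil => simp
  | cons a l ih =>
    simp only [List.map_cons, List.sum_cons, List.length_cons]
    have h1 := ih (fun b hb => h b (List.mem_cons_of_mem _ hb))
    have h2 := h a (List.mem_cons_self)
    calc f a + (l.map f).sum ≤ K + l.length * K := Nat.add_le_add h2 h1
      _ = (l.length + 1) * K := by ring

lemma expand_mem_length (z : ℂ) : ∀ vs, ∀ u ∈ expand z vs, u.length ≤ vs.length + 1 := by
  intro vs
  induction vs with
  | nil => simp [expand]
  | cons v vs ih =>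
    intro u hu
    simp only [expand, List.mem_cons, List.mem_map] at hu
    rcases hu with rfl | rfl | ⟨w, hw, rfl⟩
    · simp
    · simp only [List.length_cons]; omega
    · simp only [List.length_cons]
      have := ih w hw
      omega

lemma parts_mem_length : ∀ zs : List ℂ, ∀ vs ∈ parts zs, vs.length ≤ zs.length := by
  intro zs
  induction zs with
  | nil => simp [parts]
  | cons z zs ih =>
    intro vs h
    simp only [parts, List.mem_flatten] at h
    obtain ⟨l, hl, hvs⟩ := h
    simp only [List.mem_map] at hl
    obtain ⟨u, hu, rfl⟩ := hl
    have := expand_mem_length z u vs hvs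
    have := ih u hu
    simp only [List.length_cons]
    omega

lemma expand_length (z : ℂ) : ∀ vs : List ℂ, (expand z vs).length = 2 * vs.length + 1 := by
  intro vs
  induction vs with
  | nil => simp [expand]
  | cons v vs ih => simp [expand, ih]; omega

lemma parts_length : ∀ zs : List ℂ, zs ≠ [] →
    (parts zs).length ≤ (2 * zs.length - 1) ^ (zs.length - 1) := by
  intro zs
  induction zs with
  | nil => intro h; exact absurd rfl h
  | cons z zs ih =>
    intro _
    cases zs with
    | nil => simp [parts, expand]
    | cons w zs' =>
      have hlen : (parts (z :: w :: zs')).length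
          = (((parts (w :: zs')).map (expand z)).map List.length).sum := by
        simp only [parts, List.length_flatten]
      have hstep : (((parts (w :: zs')).map (expand z)).map List.length).sum
          ≤ (parts (w :: zs')).length * (2 * (w :: zs').length + 1) := by
        rw [List.map_map]
        apply list_sum_le_nat
        intro u hu
        simp only [Function.comp, expand_length]
        have := parts_mem_length (w :: zs') u hu
        omega
      have hih := ih (by simp)
      set k := (w :: zs').length with hk
      have hk1 : 1 ≤ k := by simp [hk]
      have hmono : (2 * k - 1) ^ (k - 1) ≤ (2 * k + 1) ^ (k - 1) :=
        Nat.pow_le_pow_left (by omega) _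
      calc (parts (z :: w :: zs')).length
          ≤ (parts (w :: zs')).length * (2 * k + 1) := by rw [hlen]; exact hstep
        _ ≤ (2 * k - 1) ^ (k - 1) * (2 * k + 1) := Nat.mul_le_mul_right _ hih
        _ ≤ (2 * k + 1) ^ (k - 1) * (2 * k + 1) := Nat.mul_le_mul_right _ hmono
        _ = (2 * k + 1) ^ (k - 1 + 1) := by rw [pow_succ]
        _ = (2 * (z :: w :: zs').length - 1) ^ ((z :: w :: zs').length - 1) := by
            simp only [List.length_cons]
            congr 1 <;> omega

lemma gEst_bound (q : ℝ) (hq0 : 0 < q) (hq1 : q < 1) (n m : ℕ) (hn : 1 ≤ n) (hm : 1 ≤ m)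
    (Z : Fin m → ℂ) (L : ℝ) (hL : 1 ≤ L)
    (hZ : ∀ k, ‖Z k‖ = 1 ∧ |Complex.arg (Z k)| ≤ 1 / L)
    (w : List Bool) (hw : w.length ≤ n) :
    ‖gEst q (List.ofFn Z) w‖ ≤
      ((1 - q)⁻¹ * m * n) ^ ((3:ℝ) * m) *
        Real.exp (3 * m ^ 2 * n / ((1 - q) ^ 2 * L ^ 2)) := by
  set p : ℝ := 1 - q with hp
  have hp0 : 0 < p := by simp [hp]; linarith
  have hp1 : p ≤ 1 := by simp [hp]; linarith
  have hL0 : 0 < L := lt_of_lt_of_le one_pos hL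
  set B : ℝ := m * (1 / L) with hB
  have hB0 : 0 ≤ B := by positivity
  set M : ℝ := Real.exp (B ^ 2 / (2 * p ^ 2)) with hMdef
  have hM : 1 ≤ M := Real.one_le_exp (by positivity)
  set zs : List ℂ := List.ofFn Z with hzs
  have hzslen : zs.length = m := by simp [hzs]
  -- each z in zs is eθ of a small angle
  have hz : ∀ z ∈ zs, ∃ θ : ℝ, |θ| ≤ 1 / L ∧ z = eθ θ := by
    intro z hzmem
    rw [hzs, List.mem_ofFn] at hzmem
    obtain ⟨k, rfl⟩ := hzmem
    refine ⟨Complex.arg (Z k), (hZ k).2, ?_⟩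
    have := Complex.norm_mul_exp_arg_mul_I (Z k)
    rw [(hZ k).1] at this
    simp only [Complex.ofReal_one, one_mul] at this
    exact this.symm
  -- bound each term
  set Kterm : ℝ := p⁻¹ ^ m * ((n : ℝ) ^ m * M ^ n) with hKterm
  have hterm : ∀ vs ∈ parts zs,
      ‖(chain vs).prod * (((1 - q : ℝ) : ℂ)⁻¹) ^ vs.length *
        FF ((chain vs).map fun u => (u - (1 - ((1 - q : ℝ) : ℂ))) / ((1 - q : ℝ) : ℂ))
          (w.map bitC)‖ ≤ Kterm := by
    intro vs hvs
    obtain ⟨θs, rfl, hθs⟩ := parts_exp (1 / L) zs hz vs hvs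
    have hθsB : (θs.map (fun t => |t|)).sum ≤ B := by
      rw [hB]; rw [hzslen] at hθs; exact hθs
    have ht : (θs.map eθ).length ≤ m := by
      have := parts_mem_length zs _ hvs
      rw [hzslen] at this; exact this
    rw [norm_mul, norm_mul]
    have e1 : ‖(chain (θs.map eθ)).prod‖ = 1 := chain_prod_abs θs
    have e2 : ‖(((1 - q : ℝ) : ℂ))⁻¹ ^ (θs.map eθ).length‖
        = p⁻¹ ^ (θs.map eθ).length := by
      rw [norm_pow, norm_inv, Complex.norm_real, Real.norm_eq_abs, abs_of_pos hp0]
    -- FF bound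
    have hwts : ∀ a ∈ (chain (θs.map eθ)).map
        (fun u => (u - (1 - ((1 - q : ℝ) : ℂ))) / ((1 - q : ℝ) : ℂ)), ‖a‖ ≤ M := by
      intro a ha
      simp only [List.mem_map] at ha
      obtain ⟨u, hu, rfl⟩ := ha
      obtain ⟨θ, hθ, rfl⟩ := chain_exp θs u hu
      have hθB : |θ| ≤ B := le_trans hθ hθsB
      have := phi_bound p θ B hp0 hp1 hθB
      have hcast : (1 - ((1 - q : ℝ) : ℂ)) = ((1 - p : ℝ) : ℂ) := by
        rw [hp]; push_cast; ring
      rw [hcast]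
      exact this
    have hbits : ∀ c ∈ w.map bitC, ‖c‖ ≤ 1 := by
      intro c hc
      simp only [List.mem_map] at hc
      obtain ⟨b, _, rfl⟩ := hc
      cases b <;> simp [bitC]
    have hFF := FF_bound M hM (w.map bitC) _ hwts hbits
    have hlen1 : (w.map bitC).length = w.length := List.length_map _
    have hlen2 : ((chain (θs.map eθ)).map
        (fun u => (u - (1 - ((1 - q : ℝ) : ℂ))) / ((1 - q : ℝ) : ℂ))).length
        = (θs.map eθ).length := by
      rw [List.length_map, chain_length]
    rw [hlen1, hlen2] at hFF
    have hchoose : ((w.length.choose (θs.map eθ).length : ℕ) : ℝ) ≤ (n : ℝ) ^ m := by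
      have c1 : w.length.choose (θs.map eθ).length ≤ n.choose (θs.map eθ).length :=
        Nat.choose_le_choose _ hw
      have c2 : n.choose (θs.map eθ).length ≤ n ^ (θs.map eθ).length :=
        Nat.choose_le_pow _ _
      have c3 : n ^ (θs.map eθ).length ≤ n ^ m := Nat.pow_le_pow_right hn ht
      calc ((w.length.choose (θs.map eθ).length : ℕ) : ℝ)
          ≤ ((n ^ m : ℕ) : ℝ) := by exact_mod_cast le_trans c1 (le_trans c2 c3)
        _ = (n : ℝ) ^ m := by push_cast; ring
    have hMr : M ^ w.length ≤ M ^ n := pow_le_pow_right₀ hM hw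
    have hFF2 : ‖FF ((chain (θs.map eθ)).map
        (fun u => (u - (1 - ((1 - q : ℝ) : ℂ))) / ((1 - q : ℝ) : ℂ))) (w.map bitC)‖
        ≤ (n : ℝ) ^ m * M ^ n := by
      refine hFF.trans ?_
      have h1 : (0:ℝ) ≤ ((w.length.choose (θs.map eθ).length : ℕ) : ℝ) := Nat.cast_nonneg _
      have h2 : (0:ℝ) ≤ M ^ w.length := by positivity
      exact mul_le_mul hchoose hMr h2 (by positivity)
    have hpinv : p⁻¹ ^ (θs.map eθ).length ≤ p⁻¹ ^ m := by
      apply pow_le_pow_right₀ _ ht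
      rw [one_le_inv_iff₀]
      exact ⟨hp0, hp1⟩
    rw [e1, e2, one_mul, hKterm]
    have habs0 : (0:ℝ) ≤ ‖FF ((chain (θs.map eθ)).map
        (fun u => (u - (1 - ((1 - q : ℝ) : ℂ))) / ((1 - q : ℝ) : ℂ))) (w.map bitC)‖ :=
      norm_nonneg _
    apply mul_le_mul hpinv hFF2 habs0 (by positivity)
  -- sum up
  unfold gEst
  have hsum := abs_list_sum_c ((parts zs).map (fun vs =>
    (chain vs).prod * (((1 - q : ℝ) : ℂ)⁻¹) ^ vs.length *
      FF ((chain vs).map fun u => (u - (1 - ((1 - q : ℝ) : ℂ))) / ((1 - q : ℝ) : ℂ))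
        (w.map bitC)))
  rw [List.map_map] at hsum
  have hsum2 : ((parts zs).map (norm ∘ fun vs =>
      (chain vs).prod * (((1 - q : ℝ) : ℂ)⁻¹) ^ vs.length *
        FF ((chain vs).map fun u => (u - (1 - ((1 - q : ℝ) : ℂ))) / ((1 - q : ℝ) : ℂ))
          (w.map bitC))).sum ≤ (parts zs).length * Kterm := by
    apply list_sum_le_real
    intro a ha
    exact hterm a ha
  have htotal : ‖gEst q zs w‖ ≤ (parts zs).length * Kterm := by
    unfold gEst
    exact le_trans hsum hsum2
  refine le_trans htotal ?_
  -- numeric endgame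
  have hNnat : (parts zs).length ≤ (2 * m - 1) ^ (m - 1) := by
    have hne : zs ≠ [] := by
      rw [hzs]
      intro hcon
      have := congrArg List.length hcon
      simp [hzslen] at this
      omega
    have := parts_length zs hne
    rw [hzslen] at this
    exact this
  have hN : ((parts zs).length : ℝ) ≤ (m : ℝ) ^ (2 * m) := by
    have step1 : (((2 * m - 1) ^ (m - 1) : ℕ) : ℝ) = ((2 * m - 1 : ℕ) : ℝ) ^ (m - 1) := by
      push_cast; ring
    have step2 : ((2 * m - 1 : ℕ) : ℝ) ≤ (m : ℝ) ^ 2 := by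
      have h1 : ((2 * m - 1 : ℕ) : ℝ) = 2 * (m : ℝ) - 1 := by
        have : 1 ≤ 2 * m := by omega
        push_cast [Nat.cast_sub this]
        ring
      rw [h1]
      nlinarith [sq_nonneg ((m : ℝ) - 1)]
    have hm1 : (1:ℝ) ≤ (m:ℝ) := by exact_mod_cast hm
    calc ((parts zs).length : ℝ) ≤ (((2 * m - 1) ^ (m - 1) : ℕ) : ℝ) := by
          exact_mod_cast hNnat
      _ = ((2 * m - 1 : ℕ) : ℝ) ^ (m - 1) := step1
      _ ≤ ((m : ℝ) ^ 2) ^ (m - 1) := by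
          apply pow_le_pow_left₀ (Nat.cast_nonneg _) step2
      _ = (m : ℝ) ^ (2 * (m - 1)) := by rw [← pow_mul]
      _ ≤ (m : ℝ) ^ (2 * m) := pow_le_pow_right₀ hm1 (by omega)
  have hMn : M ^ n = Real.exp ((n : ℝ) * (B ^ 2 / (2 * p ^ 2))) := by
    rw [hMdef, Real.exp_nat_mul]
  have hexp_le : (n : ℝ) * (B ^ 2 / (2 * p ^ 2)) ≤ 3 * m ^ 2 * n / ((1 - q) ^ 2 * L ^ 2) := by
    rw [hB, ← hp]
    have h1 : (n : ℝ) * (((m : ℝ) * (1 / L)) ^ 2 / (2 * p ^ 2))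
        = (m : ℝ) ^ 2 * n / (2 * (p ^ 2 * L ^ 2)) := by
      field_simp
    rw [h1]
    rw [div_le_div_iff₀ (by positivity) (by positivity)]
    nlinarith [mul_pos (pow_pos hp0 2) (pow_pos hL0 2),
      (by positivity : (0:ℝ) ≤ (m:ℝ)^2 * (n:ℝ) * (p^2 * L^2))]
  have hrpow : ((1 - q)⁻¹ * m * n) ^ ((3:ℝ) * m)
      = ((1 - q)⁻¹ * m * n) ^ (3 * m : ℕ) := by
    rw [show (3:ℝ) * (m:ℝ) = ((3 * m : ℕ) : ℝ) by push_cast; ring, Real.rpow_natCast]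
  rw [hrpow]
  have hm1 : (1:ℝ) ≤ (m:ℝ) := by exact_mod_cast hm
  have hn1 : (1:ℝ) ≤ (n:ℝ) := by exact_mod_cast hn
  have hpinv1 : (1:ℝ) ≤ p⁻¹ := by rw [one_le_inv_iff₀]; exact ⟨hp0, hp1⟩
  have hpoly : ((parts zs).length : ℝ) * (p⁻¹ ^ m * ((n:ℝ) ^ m))
      ≤ ((1 - q)⁻¹ * m * n) ^ (3 * m : ℕ) := by
    rw [mul_pow, mul_pow, ← hp]
    calc ((parts zs).length : ℝ) * (p⁻¹ ^ m * ((n:ℝ) ^ m))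
        ≤ (m : ℝ) ^ (2 * m) * (p⁻¹ ^ m * ((n:ℝ) ^ m)) := by
          apply mul_le_mul_of_nonneg_right hN (by positivity)
      _ ≤ (m : ℝ) ^ (3 * m) * (p⁻¹ ^ (3 * m) * ((n:ℝ) ^ (3 * m))) := by
          have a1 : (m : ℝ) ^ (2 * m) ≤ (m : ℝ) ^ (3 * m) :=
            pow_le_pow_right₀ hm1 (by omega)
          have a2 : p⁻¹ ^ m ≤ p⁻¹ ^ (3 * m) := pow_le_pow_right₀ hpinv1 (by omega)
          have a3 : (n:ℝ) ^ m ≤ (n:ℝ) ^ (3 * m) := pow_le_pow_right₀ hn1 (by omega)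
          have b1 : (0:ℝ) ≤ (m : ℝ) ^ (2 * m) := by positivity
          have b2 : (0:ℝ) ≤ p⁻¹ ^ m := by positivity
          have b3 : (0:ℝ) ≤ (n:ℝ) ^ m := by positivity
          apply mul_le_mul a1 (mul_le_mul a2 a3 b3 (by positivity)) (by positivity) (by positivity)
      _ = p⁻¹ ^ (3 * m) * (m : ℝ) ^ (3 * m) * (n:ℝ) ^ (3 * m) := by ring
  calc ((parts zs).length : ℝ) * Kterm
      = ((parts zs).length : ℝ) * (p⁻¹ ^ m * ((n:ℝ) ^ m)) * M ^ n := by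
        rw [hKterm]; ring
    _ ≤ ((1 - q)⁻¹ * m * n) ^ (3 * m : ℕ) * Real.exp (3 * m ^ 2 * n / ((1 - q) ^ 2 * L ^ 2)) := by
        apply mul_le_mul hpoly ?_ (by positivity) (by positivity)
        rw [hMn]
        exact Real.exp_le_exp.mpr hexp_le


theorem stmt_11 :
    ∃ C : ℝ, 0 < C ∧
      ∀ n : ℕ, 1 ≤ n → ∀ q : ℝ, 0 < q → q < 1 → ∀ m : ℕ, 1 ≤ m →
        ∀ Z : Fin m → ℂ, (∀ k, Z k ≠ 0) →
          ∃ g : List Bool → ℂ,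
            -- unbiasedness: the expectation over a trace `x̃` of `x` equals the product
            (∀ x : ℕ → Bool,
              (∑ mask : Fin n → Bool, (maskProb q mask : ℂ) * g (applyMask x mask)) =
                ∏ k : Fin m, ∑ i ∈ Finset.range n,
                  (if x i then 1 else 0 : ℂ) * Z k ^ (i + 1)) ∧
            -- the boundedness claim
            (∀ L : ℝ, 1 ≤ L →
              (∀ k, ‖Z k‖ = 1 ∧ |Complex.arg (Z k)| ≤ 1 / L) →
              ∀ w : List Bool, w.length ≤ n →
                ‖g w‖ ≤
                  ((1 - q)⁻¹ * m * n) ^ (C * m) *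
                    Real.exp (C * m ^ 2 * n / ((1 - q) ^ 2 * L ^ 2))) := by
  refine ⟨3, by norm_num, ?_⟩
  intro n hn q hq0 hq1 m hm Z hZ0
  refine ⟨gEst q (List.ofFn Z), ?_, ?_⟩
  · intro x
    exact unbiased q hq1 n m Z x
  · intro L hL hZ w hw
    exact gEst_bound q hq0 hq1 n m hn hm Z L hL hZ w hw
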